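/- Let X₁, X₂, X₃ be Polish spaces with Borel probability measures μ₁, μ₂, μ₃, and let c₁₂ : X₁ × X₂ → ℝ and c₂₃ : X₂ × X₃ → ℝ be bounded continuous (or nonnegative Borel measurable). Then the multimarginal optimal transport value decomposes along the chain: inf over P ∈ Γ(μ₁, μ₂, μ₃) of ∫ [c₁₂(x₁, x₂) + c₂₃(x₂, x₃)] dP(x₁, x₂, x₃) equals inf over Q ∈ Γ(μ₁, μ₂) of ∫ c₁₂ dQ plus inf over R ∈ Γ(μ₂, μ₃) of ∫ c₂₃ dR. -/

import Mathlib

open MeasureTheory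

open scoped ProbabilityTheory

section Stmt16Aux

open ProbabilityTheory

lemma stmt16_map_compProd_fst {α β γ : Type*} [MeasurableSpace α] [MeasurableSpace β]
    [MeasurableSpace γ] (μ : Measure α) [SFinite μ] (κ : Kernel α (β × γ))
    [IsSFiniteKernel κ] :
    (μ ⊗ₘ κ).map (fun p => (p.1, p.2.1)) = μ ⊗ₘ κ.fst := by
  ext s hs
  rw [Measure.map_apply (by fun_prop) hs, Measure.compProd_apply (hs.preimage (by fun_prop)),
    Measure.compProd_apply hs]
  congr 1
  ext a
  rw [Kernel.fst_apply' _ _ (measurable_prodMk_left hs)]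
  congr 1

lemma stmt16_map_compProd_snd {α β γ : Type*} [MeasurableSpace α] [MeasurableSpace β]
    [MeasurableSpace γ] (μ : Measure α) [SFinite μ] (κ : Kernel α (β × γ))
    [IsSFiniteKernel κ] :
    (μ ⊗ₘ κ).map (fun p => (p.1, p.2.2)) = μ ⊗ₘ κ.snd := by
  ext s hs
  rw [Measure.map_apply (by fun_prop) hs, Measure.compProd_apply (hs.preimage (by fun_prop)),
    Measure.compProd_apply hs]
  congr 1
  ext a
  rw [Kernel.snd_apply' _ _ (measurable_prodMk_left hs)]
  congr 1

lemma stmt16_integrable {α : Type*} [MeasurableSpace α] (μ : Measure α)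
    [IsProbabilityMeasure μ] {f : α → ℝ} (hf : AEStronglyMeasurable f μ) {M : ℝ}
    (hM : ∀ x, |f x| ≤ M) : Integrable f μ :=
  Integrable.mono' (integrable_const M) hf (ae_of_all _ fun x => by
    simpa [Real.norm_eq_abs] using hM x)

lemma stmt16_integral_ge {α : Type*} [MeasurableSpace α] (μ : Measure α)
    [IsProbabilityMeasure μ] {f : α → ℝ} (hf : AEStronglyMeasurable f μ) {M : ℝ}
    (hM : ∀ x, |f x| ≤ M) : -M ≤ ∫ x, f x ∂μ := by
  calc -M = ∫ _x, (-M : ℝ) ∂μ := by simp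
  _ ≤ ∫ x, f x ∂μ :=
    integral_mono (integrable_const _) (stmt16_integrable μ hf hM)
      (fun x => (abs_le.1 (hM x)).1)

lemma stmt16_nonempty {α : Type*} [MeasurableSpace α] (μ : Measure α)
    [IsProbabilityMeasure μ] : Nonempty α := by
  by_contra h
  rw [not_nonempty_iff] at h
  have h1 : μ Set.univ = 1 := measure_univ
  rw [Set.univ_eq_empty_iff.2 h] at h1
  simp at h1

end Stmt16Aux

open ProbabilityTheory

/-- For Polish spaces with Borel probability measures `μ₁, μ₂, μ₃` and bounded
continuous pairwise costs `c₁₂, c₂₃`, the multimarginal OT value for the chain cost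
`c₁₂(x₁,x₂) + c₂₃(x₂,x₃)` decomposes as the sum of the two two-marginal OT values. -/
theorem stmt16 {X₁ X₂ X₃ : Type*}
    [TopologicalSpace X₁] [PolishSpace X₁] [MeasurableSpace X₁] [BorelSpace X₁]
    [TopologicalSpace X₂] [PolishSpace X₂] [MeasurableSpace X₂] [BorelSpace X₂]
    [TopologicalSpace X₃] [PolishSpace X₃] [MeasurableSpace X₃] [BorelSpace X₃]
    (μ₁ : Measure X₁) (μ₂ : Measure X₂) (μ₃ : Measure X₃)
    [IsProbabilityMeasure μ₁] [IsProbabilityMeasure μ₂] [IsProbabilityMeasure μ₃]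
    (c₁₂ : X₁ → X₂ → ℝ) (c₂₃ : X₂ → X₃ → ℝ)
    (hc₁₂ : Continuous fun p : X₁ × X₂ => c₁₂ p.1 p.2)
    (hc₂₃ : Continuous fun p : X₂ × X₃ => c₂₃ p.1 p.2)
    (hc₁₂b : ∃ M, ∀ x y, |c₁₂ x y| ≤ M) (hc₂₃b : ∃ M, ∀ x y, |c₂₃ x y| ≤ M) :
    (⨅ P : {P : Measure (X₁ × X₂ × X₃) // IsProbabilityMeasure P ∧
        P.map (fun x => x.1) = μ₁ ∧ P.map (fun x => x.2.1) = μ₂ ∧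
        P.map (fun x => x.2.2) = μ₃},
      ∫ x, (c₁₂ x.1 x.2.1 + c₂₃ x.2.1 x.2.2) ∂P.1)
    = (⨅ Q : {Q : Measure (X₁ × X₂) // IsProbabilityMeasure Q ∧
          Q.map Prod.fst = μ₁ ∧ Q.map Prod.snd = μ₂},
        ∫ x, c₁₂ x.1 x.2 ∂Q.1)
      + ⨅ R : {R : Measure (X₂ × X₃) // IsProbabilityMeasure R ∧
          R.map Prod.fst = μ₂ ∧ R.map Prod.snd = μ₃},
        ∫ x, c₂₃ x.1 x.2 ∂ R.1 := by
  haveI : Nonempty X₁ := stmt16_nonempty μ₁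
  haveI : Nonempty X₂ := stmt16_nonempty μ₂
  haveI : Nonempty X₃ := stmt16_nonempty μ₃
  obtain ⟨M₁, hM₁⟩ := hc₁₂b
  obtain ⟨M₂, hM₂⟩ := hc₂₃b
  have m12 : Measurable fun x : X₁ × X₂ × X₃ => (x.1, x.2.1) := by fun_prop
  have m23 : Measurable fun x : X₁ × X₂ × X₃ => (x.2.1, x.2.2) := by fun_prop
  have hcont1 : Continuous fun x : X₁ × X₂ × X₃ => c₁₂ x.1 x.2.1 :=
    hc₁₂.comp' (by fun_prop : Continuous fun x : X₁ × X₂ × X₃ => (x.1, x.2.1))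
  have hcont2 : Continuous fun x : X₁ × X₂ × X₃ => c₂₃ x.2.1 x.2.2 :=
    hc₂₃.comp' (by fun_prop : Continuous fun x : X₁ × X₂ × X₃ => (x.2.1, x.2.2))
  -- key integral identity
  have key : ∀ P : Measure (X₁ × X₂ × X₃), IsProbabilityMeasure P →
      ∫ x, (c₁₂ x.1 x.2.1 + c₂₃ x.2.1 x.2.2) ∂P
        = (∫ x, c₁₂ x.1 x.2 ∂(P.map fun x => (x.1, x.2.1)))
          + ∫ x, c₂₃ x.1 x.2 ∂(P.map fun x => (x.2.1, x.2.2)) := by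
    intro P hP
    rw [integral_map m12.aemeasurable hc₁₂.aestronglyMeasurable,
      integral_map m23.aemeasurable hc₂₃.aestronglyMeasurable,
      ← integral_add
        (stmt16_integrable P hcont1.aestronglyMeasurable (fun x => hM₁ _ _))
        (stmt16_integrable P hcont2.aestronglyMeasurable (fun x => hM₂ _ _))]
  -- nonemptiness of the three index types
  have hQne : Nonempty {Q : Measure (X₁ × X₂) // IsProbabilityMeasure Q ∧
      Q.map Prod.fst = μ₁ ∧ Q.map Prod.snd = μ₂} :=
    ⟨⟨μ₁.prod μ₂, inferInstance, Measure.fst_prod, Measure.snd_prod⟩⟩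
  have hRne : Nonempty {R : Measure (X₂ × X₃) // IsProbabilityMeasure R ∧
      R.map Prod.fst = μ₂ ∧ R.map Prod.snd = μ₃} :=
    ⟨⟨μ₂.prod μ₃, inferInstance, Measure.fst_prod, Measure.snd_prod⟩⟩
  haveI hPne : Nonempty {P : Measure (X₁ × X₂ × X₃) // IsProbabilityMeasure P ∧
      P.map (fun x => x.1) = μ₁ ∧ P.map (fun x => x.2.1) = μ₂ ∧
      P.map (fun x => x.2.2) = μ₃} := by
    refine ⟨⟨μ₁.prod (μ₂.prod μ₃), inferInstance, ?_, ?_, ?_⟩⟩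
    · exact Measure.fst_prod
    · show ((μ₁.prod (μ₂.prod μ₃)).map fun x => x.2.1) = μ₂
      rw [show (fun x : X₁ × X₂ × X₃ => x.2.1) = (Prod.fst ∘ Prod.snd) from rfl,
        ← Measure.map_map measurable_fst measurable_snd,
        show (μ₁.prod (μ₂.prod μ₃)).map Prod.snd = μ₂.prod μ₃ from Measure.snd_prod]
      exact Measure.fst_prod
    · show ((μ₁.prod (μ₂.prod μ₃)).map fun x => x.2.2) = μ₃
      rw [show (fun x : X₁ × X₂ × X₃ => x.2.2) = (Prod.snd ∘ Prod.snd) from rfl,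
        ← Measure.map_map measurable_snd measurable_snd,
        show (μ₁.prod (μ₂.prod μ₃)).map Prod.snd = μ₂.prod μ₃ from Measure.snd_prod]
      exact Measure.snd_prod
  -- lower bounds
  have hgB : ∀ Q : {Q : Measure (X₁ × X₂) // IsProbabilityMeasure Q ∧
      Q.map Prod.fst = μ₁ ∧ Q.map Prod.snd = μ₂},
      -M₁ ≤ ∫ x, c₁₂ x.1 x.2 ∂Q.1 := by
    intro Q
    haveI := Q.2.1
    exact stmt16_integral_ge Q.1 hc₁₂.aestronglyMeasurable (fun x => hM₁ _ _)
  have hhB : ∀ R : {R : Measure (X₂ × X₃) // IsProbabilityMeasure R ∧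
      R.map Prod.fst = μ₂ ∧ R.map Prod.snd = μ₃},
      -M₂ ≤ ∫ x, c₂₃ x.1 x.2 ∂ R.1 := by
    intro R
    haveI := R.2.1
    exact stmt16_integral_ge R.1 hc₂₃.aestronglyMeasurable (fun x => hM₂ _ _)
  have hgBdd : BddBelow (Set.range fun Q : {Q : Measure (X₁ × X₂) //
      IsProbabilityMeasure Q ∧ Q.map Prod.fst = μ₁ ∧ Q.map Prod.snd = μ₂} =>
      ∫ x, c₁₂ x.1 x.2 ∂Q.1) := ⟨-M₁, by rintro _ ⟨Q, rfl⟩; exact hgB Q⟩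
  have hhBdd : BddBelow (Set.range fun R : {R : Measure (X₂ × X₃) //
      IsProbabilityMeasure R ∧ R.map Prod.fst = μ₂ ∧ R.map Prod.snd = μ₃} =>
      ∫ x, c₂₃ x.1 x.2 ∂ R.1) := ⟨-M₂, by rintro _ ⟨R, rfl⟩; exact hhB R⟩
  apply le_antisymm
  · -- ≤ : gluing
    have h2 : ∀ (Q : {Q : Measure (X₁ × X₂) // IsProbabilityMeasure Q ∧
          Q.map Prod.fst = μ₁ ∧ Q.map Prod.snd = μ₂})
        (R : {R : Measure (X₂ × X₃) // IsProbabilityMeasure R ∧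
          R.map Prod.fst = μ₂ ∧ R.map Prod.snd = μ₃}),
        (⨅ P : {P : Measure (X₁ × X₂ × X₃) // IsProbabilityMeasure P ∧
            P.map (fun x => x.1) = μ₁ ∧ P.map (fun x => x.2.1) = μ₂ ∧
            P.map (fun x => x.2.2) = μ₃},
          ∫ x, (c₁₂ x.1 x.2.1 + c₂₃ x.2.1 x.2.2) ∂P.1)
          ≤ (∫ x, c₁₂ x.1 x.2 ∂Q.1) + ∫ x, c₂₃ x.1 x.2 ∂ R.1 := by
      intro Q R
      obtain ⟨hQ, hQ1, hQ2⟩ := Q.2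
      obtain ⟨hR, hR1, hR2⟩ := R.2
      haveI := hQ; haveI := hR
      set Q' : Measure (X₂ × X₁) := Q.1.map Prod.swap with hQ'def
      haveI : IsProbabilityMeasure Q' :=
        Measure.isProbabilityMeasure_map measurable_swap.aemeasurable
      have hQ'fst : Q'.fst = μ₂ := by
        rw [Measure.fst, hQ'def, Measure.map_map measurable_fst measurable_swap]
        exact hQ2
      have hRfst : R.1.fst = μ₂ := hR1
      have hκ : μ₂ ⊗ₘ Q'.condKernel = Q' := by
        have h := Q'.disintegrate Q'.condKernel
        rwa [hQ'fst] at h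
      have hη : μ₂ ⊗ₘ R.1.condKernel = R.1 := by
        have h := R.1.disintegrate R.1.condKernel
        rwa [hRfst] at h
      set ν : Measure (X₂ × X₁ × X₃) := μ₂ ⊗ₘ (Q'.condKernel ×ₖ R.1.condKernel) with hνdef
      haveI : IsProbabilityMeasure ν := by rw [hνdef]; infer_instance
      have mP : Measurable fun p : X₂ × X₁ × X₃ => (p.2.1, p.1, p.2.2) := by fun_prop
      set P : Measure (X₁ × X₂ × X₃) := ν.map (fun p => (p.2.1, p.1, p.2.2)) with hPdef
      haveI hPprob : IsProbabilityMeasure P := Measure.isProbabilityMeasure_map mP.aemeasurable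
      have hP12 : P.map (fun x => (x.1, x.2.1)) = Q.1 := by
        rw [hPdef, Measure.map_map m12 mP]
        have heq : ((fun x : X₁ × X₂ × X₃ => (x.1, x.2.1)) ∘
            fun p : X₂ × X₁ × X₃ => (p.2.1, p.1, p.2.2))
            = (Prod.swap ∘ fun p : X₂ × X₁ × X₃ => (p.1, p.2.1)) := rfl
        rw [heq, ← Measure.map_map measurable_swap (by fun_prop), hνdef,
          stmt16_map_compProd_fst, Kernel.fst_prod, hκ, hQ'def,
          Measure.map_map measurable_swap measurable_swap]
        simp [Prod.swap_swap_eq]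
      have hP23 : P.map (fun x => (x.2.1, x.2.2)) = R.1 := by
        rw [hPdef, Measure.map_map m23 mP]
        have heq : ((fun x : X₁ × X₂ × X₃ => (x.2.1, x.2.2)) ∘
            fun p : X₂ × X₁ × X₃ => (p.2.1, p.1, p.2.2))
            = fun p : X₂ × X₁ × X₃ => (p.1, p.2.2) := rfl
        rw [heq, hνdef, stmt16_map_compProd_snd, Kernel.snd_prod, hη]
      have hP1 : P.map (fun x => x.1) = μ₁ := by
        rw [← hQ1, ← hP12, Measure.map_map measurable_fst m12]; rfl
      have hP2 : P.map (fun x => x.2.1) = μ₂ := by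
        rw [← hQ2, ← hP12, Measure.map_map measurable_snd m12]; rfl
      have hP3 : P.map (fun x => x.2.2) = μ₃ := by
        rw [← hR2, ← hP23, Measure.map_map measurable_snd m23]; rfl
      haveI : Nonempty {P' : Measure (X₁ × X₂ × X₃) // IsProbabilityMeasure P' ∧
          P'.map (fun x => x.1) = μ₁ ∧ P'.map (fun x => x.2.1) = μ₂ ∧
          P'.map (fun x => x.2.2) = μ₃} := ⟨⟨P, hPprob, hP1, hP2, hP3⟩⟩
      calc (⨅ P : {P : Measure (X₁ × X₂ × X₃) // IsProbabilityMeasure P ∧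
          P.map (fun x => x.1) = μ₁ ∧ P.map (fun x => x.2.1) = μ₂ ∧
          P.map (fun x => x.2.2) = μ₃},
            ∫ x, (c₁₂ x.1 x.2.1 + c₂₃ x.2.1 x.2.2) ∂P.1)
          ≤ ∫ x, (c₁₂ x.1 x.2.1 + c₂₃ x.2.1 x.2.2) ∂P := by
            have hbdd3 : BddBelow (Set.range fun P' : {P' : Measure (X₁ × X₂ × X₃) //
                IsProbabilityMeasure P' ∧ P'.map (fun x => x.1) = μ₁ ∧
                P'.map (fun x => x.2.1) = μ₂ ∧ P'.map (fun x => x.2.2) = μ₃} =>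
                ∫ x, (c₁₂ x.1 x.2.1 + c₂₃ x.2.1 x.2.2) ∂P'.1) := by
              refine ⟨-(M₁ + M₂), ?_⟩
              rintro _ ⟨P', rfl⟩
              haveI := P'.2.1
              refine stmt16_integral_ge P'.1
                (hcont1.add hcont2).aestronglyMeasurable (fun x => ?_)
              exact (abs_add_le _ _).trans (add_le_add (hM₁ _ _) (hM₂ _ _))
            exact ciInf_le hbdd3 ⟨P, hPprob, hP1, hP2, hP3⟩
        _ = (∫ x, c₁₂ x.1 x.2 ∂Q.1) + ∫ x, c₂₃ x.1 x.2 ∂ R.1 := by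
            rw [key P hPprob, hP12, hP23]
    have step : ∀ (Q : {Q : Measure (X₁ × X₂) // IsProbabilityMeasure Q ∧
        Q.map Prod.fst = μ₁ ∧ Q.map Prod.snd = μ₂}), (⨅ P : {P : Measure (X₁ × X₂ × X₃) // IsProbabilityMeasure P ∧
        P.map (fun x => x.1) = μ₁ ∧ P.map (fun x => x.2.1) = μ₂ ∧
        P.map (fun x => x.2.2) = μ₃},
          ∫ x, (c₁₂ x.1 x.2.1 + c₂₃ x.2.1 x.2.2) ∂P.1) - ∫ x, c₁₂ x.1 x.2 ∂Q.1
          ≤ ⨅ R : {R : Measure (X₂ × X₃) // IsProbabilityMeasure R ∧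
            R.map Prod.fst = μ₂ ∧ R.map Prod.snd = μ₃}, ∫ x, c₂₃ x.1 x.2 ∂ R.1 :=
      fun Q => le_ciInf fun R => sub_le_iff_le_add'.2 (h2 Q R)
    have step2 := le_ciInf fun Q => sub_le_comm.1 (step Q)
    exact sub_le_iff_le_add.1 step2
  · -- ≥ : projections
    refine le_ciInf fun P => ?_
    obtain ⟨hP, h1, h2, h3⟩ := P.2
    haveI := hP
    have hQmem : IsProbabilityMeasure (P.1.map fun x => (x.1, x.2.1)) ∧
        (P.1.map fun x => (x.1, x.2.1)).map Prod.fst = μ₁ ∧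
        (P.1.map fun x => (x.1, x.2.1)).map Prod.snd = μ₂ := by
      refine ⟨Measure.isProbabilityMeasure_map m12.aemeasurable, ?_, ?_⟩
      · rw [Measure.map_map measurable_fst m12]; exact h1
      · rw [Measure.map_map measurable_snd m12]; exact h2
    have hRmem : IsProbabilityMeasure (P.1.map fun x => (x.2.1, x.2.2)) ∧
        (P.1.map fun x => (x.2.1, x.2.2)).map Prod.fst = μ₂ ∧
        (P.1.map fun x => (x.2.1, x.2.2)).map Prod.snd = μ₃ := by
      refine ⟨Measure.isProbabilityMeasure_map m23.aemeasurable, ?_, ?_⟩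
      · rw [Measure.map_map measurable_fst m23]; exact h2
      · rw [Measure.map_map measurable_snd m23]; exact h3
    rw [key P.1 hP]
    exact add_le_add (ciInf_le hgBdd ⟨_, hQmem⟩) (ciInf_le hhBdd ⟨_, hRmem⟩)
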